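/- Let G : ℝ × ℝ → ℝ be C², 1-periodic in its second variable, with ∂_r G and ∂²_{rr} G bounded, and let a ∈ ℝ be such that c_0 := ∫_0^1 ∂_r G(a, x) dx ≠ 0. Let ζ : ℝ → ℝ be nonnegative, continuous and compactly supported, and for R ∈ ℕ set ζ_R(x) := Σ_{k∈ℤ} ζ(x − Rk). Suppose that (S_R)_{R∈ℕ} is a sequence of reals with |S_R| ≤ C/R for some C > 0, satisfying, for all sufficiently large R ∈ ℕ, ∫_{−R/2}^{R/2} ( G(ζ_R(x) + a + S_R, x) − G(a, x) ) dx = 0. Then lim_{R→∞} R·S_R = −c_0^{−1} ∫_ℝ ( G(ζ(x) + a, x) − G(a, x) ) dx. -/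

import Mathlib

open MeasureTheory Filter Topology Set

noncomputable section

/-- the real-analysis core of the one-dimensional periodic asymptotic
expansion: if `|S_R| ≤ C/R` and
`∫_{-R/2}^{R/2} (G(ζ_R(x) + a + S_R, x) - G(a, x)) dx = 0` for all large `R`, then
`R S_R → -c₀⁻¹ ∫_ℝ (G(ζ(x) + a, x) - G(a, x)) dx`. -/
theorem one_dim_expansion_core_periodic
    (G : ℝ → ℝ → ℝ) (hG : ContDiff ℝ 2 fun q : ℝ × ℝ => G q.1 q.2)
    (hGper : ∀ r x : ℝ, G r (x + 1) = G r x)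
    (hD1 : ∃ M : ℝ, ∀ r x : ℝ, |deriv (fun s => G s x) r| ≤ M)
    (hD2 : ∃ M : ℝ, ∀ r x : ℝ, |deriv (deriv fun s => G s x) r| ≤ M)
    (a c₀ : ℝ) (hc₀ : c₀ = ∫ x in (0 : ℝ)..1, deriv (fun s => G s x) a) (hc₀ne : c₀ ≠ 0)
    (ζ : ℝ → ℝ) (hζ0 : ∀ x, 0 ≤ ζ x) (hζc : Continuous ζ) (hζs : HasCompactSupport ζ)
    (S : ℕ → ℝ) (C : ℝ) (hC : 0 < C) (hS : ∀ R : ℕ, 1 ≤ R → |S R| ≤ C / R)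
    (heq : ∀ᶠ R : ℕ in atTop,
      ∫ x in (-(R : ℝ) / 2)..((R : ℝ) / 2),
        (G ((∑' k : ℤ, ζ (x - R * k)) + a + S R) x - G a x) = 0) :
    Tendsto (fun R : ℕ => (R : ℝ) * S R) atTop
      (𝓝 (-c₀⁻¹ * ∫ x : ℝ, (G (ζ x + a) x - G a x))) := by
  classical
  obtain ⟨M₂, hM₂⟩ := hD2
  have hM₂0 : 0 ≤ M₂ := le_trans (abs_nonneg _) (hM₂ 0 0)
  set F : ℝ × ℝ → ℝ := fun q => G q.1 q.2 with hF
  -- the partial derivative in the first variable, expressed via the full derivative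
  have hDer : ∀ (r x : ℝ), HasDerivAt (fun s => G s x) (fderiv ℝ F (r, x) (1, 0)) r := by
    intro r x
    have h1 : HasDerivAt (fun s : ℝ => (s, x)) ((1 : ℝ), (0 : ℝ)) r :=
      (hasDerivAt_id r).prodMk (hasDerivAt_const r x)
    exact ((hG.differentiable two_ne_zero) (r, x)).hasFDerivAt.comp_hasDerivAt r h1
  have hDeq : ∀ (r x : ℝ), deriv (fun s => G s x) r = fderiv ℝ F (r, x) (1, 0) :=
    fun r x => (hDer r x).deriv
  have hDcont : Continuous fun p : ℝ × ℝ => deriv (fun s => G s p.2) p.1 := by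
    have h : Continuous fun p : ℝ × ℝ => fderiv ℝ F p ((1 : ℝ), (0 : ℝ)) :=
      (hG.continuous_fderiv two_ne_zero).clm_apply continuous_const
    have he : (fun p : ℝ × ℝ => deriv (fun s => G s p.2) p.1)
        = fun p : ℝ × ℝ => fderiv ℝ F p ((1 : ℝ), (0 : ℝ)) := by
      funext p
      rw [hDeq p.1 p.2]
    rw [he]; exact h
  -- each slice is C²
  have hGx : ∀ x : ℝ, ContDiff ℝ 2 (fun s => G s x) := fun x =>
    hG.comp (contDiff_id.prodMk contDiff_const)
  have hDdiff : ∀ x : ℝ, Differentiable ℝ (deriv (fun s => G s x)) := by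
    intro x
    have h2 : ContDiff ℝ ((1 : ℕ) + 1) (fun s => G s x) := by
      have := hGx x
      norm_num at this ⊢
      exact this
    exact ((contDiff_succ_iff_deriv.mp h2).2.2).differentiable one_ne_zero
  -- Lipschitz bound on the first partial derivative
  have hLip : ∀ (x r u : ℝ),
      |deriv (fun s => G s x) u - deriv (fun s => G s x) r| ≤ M₂ * |u - r| := by
    intro x r u
    have := Convex.norm_image_sub_le_of_norm_hasDerivWithin_le
      (f := deriv (fun s => G s x)) (f' := deriv (deriv (fun s => G s x)))
      (s := (univ : Set ℝ))
      (fun y _ => ((hDdiff x y).hasDerivAt).hasDerivWithinAt)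
      (fun y _ => by simpa [Real.norm_eq_abs] using hM₂ y x)
      convex_univ (mem_univ r) (mem_univ u)
    simpa [Real.norm_eq_abs] using this
  -- Taylor estimate
  have taylor : ∀ (x b s : ℝ),
      |G (b + s) x - G b x - s * deriv (fun u => G u x) b| ≤ M₂ * s ^ 2 := by
    intro x b s
    set c := deriv (fun u => G u x) b with hc
    have hmem : ∀ u ∈ uIcc b (b + s), |u - b| ≤ |s| := by
      intro u hu
      have h1 := le_abs_self s
      have h2 := neg_abs_le s
      rcases Set.mem_uIcc.mp hu with ⟨ha, hb⟩ | ⟨ha, hb⟩ <;> rw [abs_le] <;>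
        constructor <;> linarith
    have hψ : ∀ u ∈ uIcc b (b + s),
        HasDerivWithinAt (fun u => G u x - u * c) (deriv (fun s => G s x) u - c)
          (uIcc b (b + s)) u := by
      intro u _
      have h1 : HasDerivAt (fun u => G u x) (deriv (fun s => G s x) u) u :=
        ((hGx x).differentiable two_ne_zero u).hasDerivAt
      have h2 : HasDerivAt (fun u : ℝ => u * c) c u := by
        simpa using (hasDerivAt_id u).mul_const c
      exact (h1.sub h2).hasDerivWithinAt
    have hkey := Convex.norm_image_sub_le_of_norm_hasDerivWithin_le hψ
      (fun u hu => by
        rw [Real.norm_eq_abs]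
        calc |deriv (fun s => G s x) u - c| ≤ M₂ * |u - b| := hLip x b u
          _ ≤ M₂ * |s| := mul_le_mul_of_nonneg_left (hmem u hu) hM₂0)
      (convex_uIcc _ _) Set.left_mem_uIcc Set.right_mem_uIcc
    rw [Real.norm_eq_abs, Real.norm_eq_abs] at hkey
    have he : G (b + s) x - (b + s) * c - (G b x - b * c)
        = G (b + s) x - G b x - s * c := by ring
    rw [he, add_sub_cancel_left] at hkey
    calc |G (b + s) x - G b x - s * c| ≤ M₂ * |s| * |s| := hkey
      _ = M₂ * s ^ 2 := by rw [mul_assoc, abs_mul_abs_self, sq]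
  -- compact support of ζ inside [-K, K]
  obtain ⟨K0, hK0b⟩ := (Metric.isBounded_iff_subset_closedBall 0).mp hζs.isBounded
  set K : ℝ := |K0| + 1 with hKdef
  have hK0 : 0 < K := by positivity
  have hKsupp : tsupport ζ ⊆ Icc (-K) K := by
    refine hK0b.trans ?_
    rw [Real.closedBall_eq_Icc]
    apply Icc_subset_Icc
    · have := le_abs_self K0; have := abs_nonneg K0; simp only [zero_sub]; linarith [neg_abs_le K0]
    · have := le_abs_self K0; simp only [zero_add]; linarith
  have hζzero : ∀ x : ℝ, x ∉ Icc (-K) K → ζ x = 0 := fun x hx =>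
    image_eq_zero_of_notMem_tsupport fun h => hx (hKsupp h)
  -- the lattice sum reduces to a single bump on the fundamental domain
  have hζ_eq : ∀ (R : ℕ), 2 * K < (R : ℝ) →
      ∀ x ∈ Icc (-(R : ℝ) / 2) ((R : ℝ) / 2), (∑' k : ℤ, ζ (x - (R : ℝ) * k)) = ζ x := by
    intro R hR x hx
    have h0 : (∑' k : ℤ, ζ (x - (R : ℝ) * k)) = ζ (x - (R : ℝ) * ((0 : ℤ) : ℝ)) := by
      apply tsum_eq_single
      intro k hk
      apply image_eq_zero_of_notMem_tsupport
      intro hmem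
      have h1 : |x - (R : ℝ) * k| ≤ K := by
        have := hKsupp hmem
        rw [mem_Icc] at this
        rw [abs_le]; exact ⟨by linarith [this.1], this.2⟩
      have hk1 : (1 : ℝ) ≤ |(k : ℝ)| := by
        rw [← Int.cast_abs]
        exact_mod_cast Int.one_le_abs hk
      have hxle : |x| ≤ (R : ℝ) / 2 := by
        rw [abs_le]; rw [mem_Icc] at hx; exact ⟨by linarith [hx.1], hx.2⟩
      have hRk : (R : ℝ) ≤ |(R : ℝ) * k| := by
        rw [abs_mul, abs_of_nonneg (Nat.cast_nonneg R)]
        nlinarith [Nat.cast_nonneg (α := ℝ) R]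
      have h2 : |(R : ℝ) * k| - |x| ≤ |x - (R : ℝ) * k| := by
        calc |(R : ℝ) * k| - |x| ≤ |(R : ℝ) * k - x| := abs_sub_abs_le_abs_sub _ _
          _ = |x - (R : ℝ) * k| := abs_sub_comm _ _
      linarith
    rw [h0]
    norm_num
  -- notation for the two limiting integrals
  set I : ℝ := ∫ x : ℝ, (G (ζ x + a) x - G a x) with hI
  set B : ℝ := ∫ x : ℝ, (deriv (fun s => G s x) (ζ x + a) - deriv (fun s => G s x) a) with hB
  -- continuity facts
  have contGx : ∀ t : ℝ, Continuous fun x => G (ζ x + a + t) x := fun t =>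
    hG.continuous.comp (((hζc.add continuous_const).add continuous_const).prodMk continuous_id)
  have contGz : Continuous fun x => G (ζ x + a) x :=
    hG.continuous.comp ((hζc.add continuous_const).prodMk continuous_id)
  have contGa : Continuous fun x => G a x :=
    hG.continuous.comp (continuous_const.prodMk continuous_id)
  have contDzx : Continuous fun x => deriv (fun s => G s x) (ζ x + a) :=
    hDcont.comp ((hζc.add continuous_const).prodMk continuous_id)
  have contDax : Continuous fun x => deriv (fun s => G s x) a :=
    hDcont.comp (continuous_const.prodMk continuous_id)
  -- support facts
  have suppI : Function.support (fun x => G (ζ x + a) x - G a x) ⊆ Icc (-K) K := by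
    rw [Function.support_subset_iff']
    intro x hx
    rw [hζzero x hx]
    simp
  have suppB : Function.support
      (fun x => deriv (fun s => G s x) (ζ x + a) - deriv (fun s => G s x) a) ⊆ Icc (-K) K := by
    rw [Function.support_subset_iff']
    intro x hx
    rw [hζzero x hx]
    simp
  -- periodicity of the derivative at level a
  have hPer : Function.Periodic (fun x => deriv (fun s => G s x) a) 1 := by
    intro x
    have hfe : (fun s => G s (x + 1)) = fun s => G s x := funext fun s => hGper s x
    simp only [hfe]
  -- exact value of the integral of the periodic part
  have hper_int : ∀ R : ℕ,
      (∫ x in (-(R : ℝ) / 2)..((R : ℝ) / 2), deriv (fun s => G s x) a) = (R : ℝ) * c₀ := by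
    intro R
    have h_int : ∀ t₁ t₂ : ℝ,
        IntervalIntegrable (fun x => deriv (fun s => G s x) a) volume t₁ t₂ :=
      fun t₁ t₂ => contDax.intervalIntegrable t₁ t₂
    have e1 : (-(R : ℝ) / 2) + ((R : ℤ) : ℝ) * (1 : ℝ) = (R : ℝ) / 2 := by push_cast; ring
    have e2 := hPer.intervalIntegral_add_zsmul_eq (R : ℤ) (-(R : ℝ) / 2) h_int
    rw [zsmul_eq_mul, e1] at e2
    rw [e2, hPer.intervalIntegral_add_eq (-(R : ℝ) / 2) 0]
    rw [zsmul_eq_mul]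
    push_cast
    rw [zero_add, ← hc₀]
  -- the remainder integral
  set E : ℕ → ℝ := fun R => ∫ x in (-(R : ℝ) / 2)..((R : ℝ) / 2),
      (G (ζ x + a + S R) x - G (ζ x + a) x
        - S R * deriv (fun s => G s x) (ζ x + a)) with hE
  -- the key eventual identity
  have key : ∀ᶠ R : ℕ in atTop, S R * ((R : ℝ) * c₀ + B) = -I - E R := by
    filter_upwards [heq, eventually_gt_atTop ⌈2 * K⌉₊] with R h0 hRK
    have hRK' : 2 * K < (R : ℝ) :=
      lt_of_le_of_lt (Nat.le_ceil _) (by exact_mod_cast hRK)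
    have hhalf : -(R : ℝ) / 2 ≤ (R : ℝ) / 2 := by
      have := Nat.cast_nonneg (α := ℝ) R; linarith
    have hKR : K < (R : ℝ) / 2 := by linarith
    -- step A: replace the lattice sum by ζ
    have hcongr : (∫ x in (-(R : ℝ) / 2)..((R : ℝ) / 2),
          (G ((∑' k : ℤ, ζ (x - (R : ℝ) * k)) + a + S R) x - G a x))
        = ∫ x in (-(R : ℝ) / 2)..((R : ℝ) / 2), (G (ζ x + a + S R) x - G a x) := by
      apply intervalIntegral.integral_congr
      intro x hx
      rw [Set.uIcc_of_le hhalf] at hx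
      simp only [hζ_eq R hRK' x hx]
    -- integrabilities
    have i1 : IntervalIntegrable (fun x => G (ζ x + a + S R) x - G (ζ x + a) x
        - S R * deriv (fun s => G s x) (ζ x + a)) volume (-(R : ℝ) / 2) ((R : ℝ) / 2) :=
      (((contGx (S R)).sub contGz).sub (continuous_const.mul contDzx)).intervalIntegrable _ _
    have i2 : IntervalIntegrable (fun x => S R * (deriv (fun s => G s x) (ζ x + a)
        - deriv (fun s => G s x) a)) volume (-(R : ℝ) / 2) ((R : ℝ) / 2) :=
      (continuous_const.mul (contDzx.sub contDax)).intervalIntegrable _ _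
    have i3 : IntervalIntegrable (fun x => S R * deriv (fun s => G s x) a) volume
        (-(R : ℝ) / 2) ((R : ℝ) / 2) :=
      (continuous_const.mul contDax).intervalIntegrable _ _
    have i4 : IntervalIntegrable (fun x => G (ζ x + a) x - G a x) volume
        (-(R : ℝ) / 2) ((R : ℝ) / 2) :=
      (contGz.sub contGa).intervalIntegrable _ _
    -- the splitting
    have e0 : ∀ x : ℝ, G (ζ x + a + S R) x - G a x
        = (G (ζ x + a + S R) x - G (ζ x + a) x - S R * deriv (fun s => G s x) (ζ x + a))
          + (S R * (deriv (fun s => G s x) (ζ x + a) - deriv (fun s => G s x) a))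
          + (S R * deriv (fun s => G s x) a)
          + (G (ζ x + a) x - G a x) := fun x => by ring
    have hsplit : (∫ x in (-(R : ℝ) / 2)..((R : ℝ) / 2), (G (ζ x + a + S R) x - G a x))
        = E R + S R * B + S R * ((R : ℝ) * c₀) + I := by
      simp only [e0]
      rw [intervalIntegral.integral_add ((i1.add i2).add i3) i4,
        intervalIntegral.integral_add (i1.add i2) i3,
        intervalIntegral.integral_add i1 i2]
      have hB2 : (∫ x in (-(R : ℝ) / 2)..((R : ℝ) / 2),
          (deriv (fun s => G s x) (ζ x + a) - deriv (fun s => G s x) a)) = B := by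
        rw [intervalIntegral.integral_eq_integral_of_support_subset
          (suppB.trans fun y hy =>
            ⟨lt_of_lt_of_le (by linarith : -(R : ℝ) / 2 < -K) hy.1,
              le_trans hy.2 (by linarith)⟩)]
      have hI2 : (∫ x in (-(R : ℝ) / 2)..((R : ℝ) / 2), (G (ζ x + a) x - G a x)) = I := by
        rw [intervalIntegral.integral_eq_integral_of_support_subset
          (suppI.trans fun y hy =>
            ⟨lt_of_lt_of_le (by linarith : -(R : ℝ) / 2 < -K) hy.1,
              le_trans hy.2 (by linarith)⟩)]
      rw [intervalIntegral.integral_const_mul, intervalIntegral.integral_const_mul,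
        hB2, hI2, hper_int R]
    have hz : E R + S R * B + S R * ((R : ℝ) * c₀) + I = 0 := by
      rw [← hsplit, ← hcongr]; exact h0
    linear_combination hz
  -- the remainder tends to zero
  have hEbound : ∀ᶠ R : ℕ in atTop, ‖E R‖ ≤ M₂ * C ^ 2 / R := by
    filter_upwards [eventually_ge_atTop 1] with R hR1
    have hR0 : (0 : ℝ) < R := by exact_mod_cast hR1
    have hb : ∀ x ∈ Set.uIoc (-(R : ℝ) / 2) ((R : ℝ) / 2),
        ‖G (ζ x + a + S R) x - G (ζ x + a) x
          - S R * deriv (fun s => G s x) (ζ x + a)‖ ≤ M₂ * (S R) ^ 2 := by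
      intro x _
      have := taylor x (ζ x + a) (S R)
      simpa [Real.norm_eq_abs, add_assoc] using this
    have hbnd := intervalIntegral.norm_integral_le_of_norm_le_const hb
    have habs : |(R : ℝ) / 2 - -(R : ℝ) / 2| = (R : ℝ) := by
      rw [abs_of_nonneg] <;> linarith
    rw [habs] at hbnd
    have h1 : (S R) ^ 2 ≤ (C / R) ^ 2 := by
      rw [← sq_abs (S R)]
      exact pow_le_pow_left₀ (abs_nonneg _) (hS R hR1) 2
    calc ‖E R‖ ≤ M₂ * (S R) ^ 2 * R := hbnd
      _ ≤ M₂ * (C / R) ^ 2 * R := by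
        apply mul_le_mul_of_nonneg_right _ hR0.le
        exact mul_le_mul_of_nonneg_left h1 hM₂0
      _ = M₂ * C ^ 2 / R := by field_simp
  have hE0 : Tendsto E atTop (𝓝 0) :=
    squeeze_zero_norm' hEbound (tendsto_const_div_atTop_nhds_zero_nat (M₂ * C ^ 2))
  have hS0 : Tendsto S atTop (𝓝 0) := by
    apply squeeze_zero_norm' _ (tendsto_const_div_atTop_nhds_zero_nat C)
    filter_upwards [eventually_ge_atTop 1] with R hR1
    simpa [Real.norm_eq_abs] using hS R hR1
  have hSB : Tendsto (fun R : ℕ => B * S R) atTop (𝓝 0) := by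
    simpa using hS0.const_mul B
  have hT : Tendsto (fun R : ℕ => S R * ((R : ℝ) * c₀ + B)) atTop (𝓝 (-I)) := by
    have h1 : Tendsto (fun R : ℕ => -I - E R) atTop (𝓝 (-I - 0)) :=
      tendsto_const_nhds.sub hE0
    rw [sub_zero] at h1
    exact h1.congr' (key.mono fun R h => h.symm)
  have hfin : Tendsto (fun R : ℕ => (S R * ((R : ℝ) * c₀ + B) - B * S R) * c₀⁻¹) atTop
      (𝓝 ((-I - 0) * c₀⁻¹)) := (hT.sub hSB).mul_const _
  have heqfun : (fun R : ℕ => (R : ℝ) * S R)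
      = fun R : ℕ => (S R * ((R : ℝ) * c₀ + B) - B * S R) * c₀⁻¹ := by
    funext R
    field_simp
    ring
  rw [heqfun]
  convert hfin using 2
  ring

end
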